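/- For all families v = (v_k)_{k∈ℤ^d}, w = (w_k)_{k∈ℤ^d} of vectors in ℂ^d with ‖v‖_n < ∞ and ‖w‖_n < ∞, the series defining (v·∂w)_k := i(2π)^{−d/2} ∑_{h∈ℤ^d} (v_h·(k−h)) w_{k−h} converges absolutely for every k ∈ ℤ^d, and ∑_{k∈ℤ^d} (1+|k|²)^{n−1} |(v·∂w)_k|² ≤ (sup_{k∈ℤ^d} 𝒦_n(k)) · ‖v‖_n² ‖w‖_n². In particular, for any constant K_n with √(sup_{k∈ℤ^d} 𝒦_n(k)) ≤ K_n, one has ‖v·∂w‖_{n−1} ≤ K_n ‖v‖_n ‖w‖_n. -/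

import Mathlib

open Set

/-- The Euclidean norm of a lattice point `h ∈ ℤ^d`. -/
noncomputable def znorm {d : ℕ} (h : Fin d → ℤ) : ℝ :=
  Real.sqrt (∑ i, ((h i : ℝ)) ^ 2)

/-- The squared Euclidean norm of a vector `c ∈ ℂ^d`. -/
noncomputable def cnorm2 {d : ℕ} (c : Fin d → ℂ) : ℝ :=
  ∑ r, ‖c r‖ ^ 2

namespace Stmt11Aux

variable {d : ℕ}

lemma znorm_nonneg (h : Fin d → ℤ) : 0 ≤ znorm h := Real.sqrt_nonneg _

lemma znorm_sq (h : Fin d → ℤ) : znorm h ^ 2 = ∑ i, ((h i : ℝ)) ^ 2 :=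
  Real.sq_sqrt (by positivity)

lemma cnorm2_nonneg (c : Fin d → ℂ) : 0 ≤ cnorm2 c := by
  unfold cnorm2; positivity

lemma cnorm2_smul (c : ℂ) (x : Fin d → ℂ) :
    cnorm2 (c • x) = ‖c‖ ^ 2 * cnorm2 x := by
  unfold cnorm2
  rw [Finset.mul_sum]
  refine Finset.sum_congr rfl fun r _ => ?_
  rw [Pi.smul_apply, smul_eq_mul, norm_mul, mul_pow]

/-- embed in Euclidean space -/
noncomputable def toE (h : Fin d → ℤ) : EuclideanSpace ℝ (Fin d) := WithLp.toLp 2 (fun i => (h i : ℝ))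

lemma znorm_eq_norm (h : Fin d → ℤ) : znorm h = ‖toE h‖ := by
  rw [EuclideanSpace.norm_eq]
  unfold znorm toE
  congr 1
  refine Finset.sum_congr rfl fun i _ => ?_
  rw [Real.norm_eq_abs, sq_abs]

lemma znorm_triangle (k h : Fin d → ℤ) : znorm k ≤ znorm h + znorm (k - h) := by
  have : toE k = toE h + toE (k - h) := by
    ext i; simp [toE, Pi.sub_apply]
  rw [znorm_eq_norm, znorm_eq_norm, znorm_eq_norm, this]
  exact norm_add_le _ _

lemma one_le_Q (h : Fin d → ℤ) : 1 ≤ 1 + znorm h ^ 2 := by nlinarith [znorm_nonneg h]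

lemma Q_pos (h : Fin d → ℤ) : 0 < 1 + znorm h ^ 2 := lt_of_lt_of_le one_pos (one_le_Q h)

lemma Q_le_four_max (k h : Fin d → ℤ) :
    1 + znorm k ^ 2 ≤ 4 * max (1 + znorm h ^ 2) (1 + znorm (k - h) ^ 2) := by
  have htri := znorm_triangle k h
  have h0k := znorm_nonneg k
  have h0h := znorm_nonneg h
  have h0kh := znorm_nonneg (k - h)
  rcases le_total (znorm h) (znorm (k - h)) with hc | hc
  · rw [max_eq_right (by nlinarith)]
    nlinarith
  · rw [max_eq_left (by nlinarith)]
    nlinarith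

lemma int_summable {p : ℝ} (hp : 1/2 < p) :
    Summable (fun m : ℤ => (1 + (m : ℝ) ^ 2) ^ (-p)) := by
  rw [← Finset.summable_compl_iff ({0} : Finset ℤ)]
  have hb : (1 : ℝ) < 2 * p := by linarith
  have hsub : Summable (fun m : {x : ℤ // x ∉ ({0} : Finset ℤ)} => |(m : ℝ)| ^ (-(2*p))) :=
    (Real.summable_abs_int_rpow hb).subtype _
  refine hsub.of_nonneg_of_le (fun m => Real.rpow_nonneg (by positivity) _) fun m => ?_
  have hm0 : (m : ℤ) ≠ 0 := by
    have := m.2; simpa using this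
  have hm : (0:ℝ) < (m : ℝ)^2 := by
    have : ((m : ℤ) : ℝ) ≠ 0 := Int.cast_ne_zero.mpr hm0
    positivity
  have h1 : (1 + ((m:ℤ) : ℝ) ^ 2) ^ (-p) ≤ ((m:ℝ) ^ 2) ^ (-p) :=
    Real.rpow_le_rpow_of_nonpos hm (by linarith) (by linarith)
  refine h1.trans_eq ?_
  rw [← sq_abs, ← Real.rpow_natCast |((m:ℤ):ℝ)| 2, ← Real.rpow_mul (abs_nonneg _)]
  norm_num

lemma pi_prod_summable {f : ℤ → ℝ} (hf : Summable f) (h0 : ∀ m, 0 ≤ f m) :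
    ∀ d : ℕ, Summable (fun h : Fin d → ℤ => ∏ i, f (h i)) := by
  intro d
  induction d with
  | zero =>
      have : (fun h : Fin 0 → ℤ => ∏ i, f (h i)) = fun _ => 1 := by
        funext h; simp
      rw [this]
      exact .of_finite
  | succ d ih =>
      have hprod : Summable (fun p : ℤ × (Fin d → ℤ) => f p.1 * ∏ i, f (p.2 i)) :=
        Summable.mul_of_nonneg (g := fun h : Fin d → ℤ => ∏ i, f (h i)) hf ih
          (fun m => h0 m) (fun h => Finset.prod_nonneg fun i _ => h0 _)
      have := (Fin.consEquiv (fun _ : Fin (d+1) => ℤ)).symm.summable_iff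
        (f := fun p : ℤ × (Fin d → ℤ) => f p.1 * ∏ i, f (p.2 i))
      rw [← this] at hprod
      refine hprod.congr fun h => ?_
      simp only [Function.comp, Fin.prod_univ_succ]
      rfl

lemma zd_summable {d : ℕ} (hd : 0 < d) {n : ℝ} (hn : (d : ℝ) / 2 < n) :
    Summable (fun h : Fin d → ℤ => (1 + znorm h ^ 2) ^ (-n)) := by
  have hd' : (0:ℝ) < d := by exact_mod_cast hd
  set q : ℝ := n / d with hq
  have hq2 : 1/2 < q := by
    rw [hq, lt_div_iff₀ hd']
    calc 1/2 * (d:ℝ) = (d:ℝ)/2 := by ring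
    _ < n := hn
  have hsum := pi_prod_summable (int_summable hq2)
    (fun m => Real.rpow_nonneg (by positivity) _) d
  refine hsum.of_nonneg_of_le (fun h => Real.rpow_nonneg (by positivity) _) fun h => ?_
  have hQ : ∀ i : Fin d, (1 : ℝ) + (h i : ℝ)^2 ≤ 1 + znorm h ^ 2 := by
    intro i
    rw [znorm_sq]
    have : ((h i : ℝ))^2 ≤ ∑ j, ((h j : ℝ))^2 :=
      Finset.single_le_sum (f := fun j => ((h j : ℝ))^2) (fun j _ => by positivity)
        (Finset.mem_univ i)
    linarith
  have hQpos : (0:ℝ) < 1 + znorm h ^ 2 := by nlinarith [znorm_nonneg h]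
  calc (1 + znorm h ^ 2) ^ (-n) = ((1 + znorm h ^ 2) ^ (-q)) ^ (d : ℕ) := by
        rw [← Real.rpow_natCast ((1 + znorm h ^ 2) ^ (-q)) d, ← Real.rpow_mul hQpos.le]
        congr 1
        rw [hq]
        field_simp
    _ = ∏ _i : Fin d, (1 + znorm h ^ 2) ^ (-q) := by
        rw [Finset.prod_const, Finset.card_univ, Fintype.card_fin]
    _ ≤ ∏ i, (1 + (h i : ℝ) ^ 2) ^ (-q) := by
        refine Finset.prod_le_prod (fun i _ => Real.rpow_nonneg hQpos.le _) fun i _ => ?_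
        exact Real.rpow_le_rpow_of_nonpos (by positivity) (hQ i) (by linarith)

private lemma div_le_div_right' {a b c : ℝ} (h : a ≤ b) (hc : 0 < c) :
    a / c ≤ b / c := by gcongr

lemma key_aux {n x y z t : ℝ} (hn1 : 1 ≤ n) (hx : 1 ≤ x) (hy : 1 ≤ y) (hz : 0 ≤ z)
    (ht : 0 ≤ t) (hty : t ≤ y) (hzxy : z ≤ 4 * max x y) :
    z ^ (n - 1) * (t / (x ^ n * y ^ n)) ≤ 4 ^ (n - 1) * (x ^ (-n) + y ^ (-n)) := by
  have hx0 : (0:ℝ) < x := by linarith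
  have hy0 : (0:ℝ) < y := by linarith
  have hxn : (0:ℝ) < x ^ n := Real.rpow_pos_of_pos hx0 n
  have hyn : (0:ℝ) < y ^ n := Real.rpow_pos_of_pos hy0 n
  have h4 : (0:ℝ) ≤ 4 ^ (n - 1) := Real.rpow_nonneg (by norm_num) _
  have hn0 : (0:ℝ) ≤ n - 1 := by linarith
  rcases le_total x y with hxy | hyx
  · have hz4 : z ≤ 4 * y := by rwa [max_eq_right hxy] at hzxy
    have h1 : z ^ (n-1) ≤ 4 ^ (n-1) * y ^ (n-1) := by
      rw [← Real.mul_rpow (by norm_num) hy0.le]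
      exact Real.rpow_le_rpow hz hz4 hn0
    have hyy : y ^ (n-1) * y = y ^ n := by
      rw [← Real.rpow_add_one hy0.ne' (n-1)]; norm_num
    have key : z ^ (n - 1) * (t / (x ^ n * y ^ n)) ≤ 4 ^ (n-1) * x ^ (-n) := by
      calc z ^ (n - 1) * (t / (x ^ n * y ^ n))
          ≤ (4 ^ (n-1) * y ^ (n-1)) * (y / (x ^ n * y ^ n)) := by
            apply mul_le_mul h1 _ (by positivity) (by positivity)
            exact div_le_div_right' hty (by positivity)
        _ = 4 ^ (n-1) * x ^ (-n) := by
            rw [Real.rpow_neg hx0.le]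
            field_simp
            exact hyy
    have : (0:ℝ) ≤ 4 ^ (n-1) * y ^ (-n) := by positivity
    linarith
  · have hz4 : z ≤ 4 * x := by rwa [max_eq_left hyx] at hzxy
    have h1 : z ^ (n-1) ≤ 4 ^ (n-1) * x ^ (n-1) := by
      rw [← Real.mul_rpow (by norm_num) hx0.le]
      exact Real.rpow_le_rpow hz hz4 hn0
    have hxx : x ^ (n-1) * x = x ^ n := by
      rw [← Real.rpow_add_one hx0.ne' (n-1)]; norm_num
    have key : z ^ (n - 1) * (t / (x ^ n * y ^ n)) ≤ 4 ^ (n-1) * y ^ (-n) := by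
      have step : x ^ (n-1) * (y / (x ^ n * y ^ n)) ≤ y ^ (-n) := by
        rw [Real.rpow_neg hy0.le, mul_div_assoc', ← one_div,
          div_le_div_iff₀ (by positivity) (by positivity)]
        have : x ^ (n-1) * y * y ^ n ≤ (x ^ (n-1) * x) * y ^ n := by
          have hxny : x ^ (n-1) * y ≤ x ^ (n-1) * x :=
            mul_le_mul_of_nonneg_left hyx (by positivity)
          exact mul_le_mul_of_nonneg_right hxny (by positivity)
        calc x ^ (n-1) * y * y ^ n ≤ (x ^ (n-1) * x) * y ^ n := this
        _ = x ^ n * y ^ n := by rw [hxx]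
        _ = 1 * (x ^ n * y ^ n) := by ring
      calc z ^ (n - 1) * (t / (x ^ n * y ^ n))
          ≤ (4 ^ (n-1) * x ^ (n-1)) * (y / (x ^ n * y ^ n)) := by
            apply mul_le_mul h1 _ (by positivity) (by positivity)
            exact div_le_div_right' hty (by positivity)
        _ = 4 ^ (n-1) * (x ^ (n-1) * (y / (x ^ n * y ^ n))) := by ring
        _ ≤ 4 ^ (n-1) * y ^ (-n) := mul_le_mul_of_nonneg_left step h4
    have : (0:ℝ) ≤ 4 ^ (n-1) * x ^ (-n) := by positivity
    linarith

/-- AM-GM comparison: `√(u i * s i)` is summable. -/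
lemma sqrt_mul_summable {ι : Type*} {u s : ι → ℝ} (hu : Summable u) (hs : Summable s)
    (hu0 : ∀ i, 0 ≤ u i) (hs0 : ∀ i, 0 ≤ s i) :
    Summable fun i => Real.sqrt (u i * s i) := by
  refine ((hu.add hs).mul_left (1/2)).of_nonneg_of_le
    (fun i => Real.sqrt_nonneg _) fun i => ?_
  have h1 : Real.sqrt (u i * s i) ≤ Real.sqrt (((u i + s i)/2)^2) := by
    apply Real.sqrt_le_sqrt
    nlinarith [sq_nonneg (u i - s i)]
  rw [Real.sqrt_sq (by linarith [hu0 i, hs0 i] : (0:ℝ) ≤ (u i + s i)/2)] at h1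
  linarith

/-- Cauchy–Schwarz for tsums. -/
lemma tsum_sqrt_mul_le {ι : Type*} {u s : ι → ℝ} (hu : Summable u) (hs : Summable s)
    (hu0 : ∀ i, 0 ≤ u i) (hs0 : ∀ i, 0 ≤ s i) :
    (∑' i, Real.sqrt (u i * s i)) ≤ Real.sqrt ((∑' i, u i) * ∑' i, s i) := by
  refine Summable.tsum_le_of_sum_le (sqrt_mul_summable hu hs hu0 hs0) fun F => ?_
  have hCS : (∑ i ∈ F, Real.sqrt (u i) * Real.sqrt (s i)) ^ 2 ≤
      (∑ i ∈ F, Real.sqrt (u i) ^ 2) * ∑ i ∈ F, Real.sqrt (s i) ^ 2 :=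
    Finset.sum_mul_sq_le_sq_mul_sq F _ _
  have heq : ∀ i, Real.sqrt (u i * s i) = Real.sqrt (u i) * Real.sqrt (s i) :=
    fun i => Real.sqrt_mul (hu0 i) _
  calc ∑ i ∈ F, Real.sqrt (u i * s i)
      = ∑ i ∈ F, Real.sqrt (u i) * Real.sqrt (s i) := Finset.sum_congr rfl fun i _ => heq i
    _ = Real.sqrt ((∑ i ∈ F, Real.sqrt (u i) * Real.sqrt (s i)) ^ 2) :=
        (Real.sqrt_sq (Finset.sum_nonneg fun i _ => by positivity)).symm
    _ ≤ Real.sqrt ((∑ i ∈ F, Real.sqrt (u i) ^ 2) * ∑ i ∈ F, Real.sqrt (s i) ^ 2) :=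
        Real.sqrt_le_sqrt hCS
    _ ≤ Real.sqrt ((∑' i, u i) * ∑' i, s i) := by
        apply Real.sqrt_le_sqrt
        have h1 : (∑ i ∈ F, Real.sqrt (u i) ^ 2) = ∑ i ∈ F, u i :=
          Finset.sum_congr rfl fun i _ => Real.sq_sqrt (hu0 i)
        have h2 : (∑ i ∈ F, Real.sqrt (s i) ^ 2) = ∑ i ∈ F, s i :=
          Finset.sum_congr rfl fun i _ => Real.sq_sqrt (hs0 i)
        rw [h1, h2]
        apply mul_le_mul (Summable.sum_le_tsum F (fun i _ => hu0 i) hu)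
          (Summable.sum_le_tsum F (fun i _ => hs0 i) hs)
          (Finset.sum_nonneg fun i _ => hs0 i) (tsum_nonneg hu0)

/-- Triangle inequality for the Euclidean norm of a tsum of vectors in `ℂ^d`. -/
lemma sqrt_cnorm2_tsum_le {d : ℕ} {ι : Type*} (f : ι → (Fin d → ℂ))
    (hf : Summable fun i => Real.sqrt (cnorm2 (f i))) :
    Real.sqrt (cnorm2 (∑' i, f i)) ≤ ∑' i, Real.sqrt (cnorm2 (f i)) := by
  set L : (Fin d → ℂ) ≃L[ℂ] EuclideanSpace ℂ (Fin d) := (EuclideanSpace.equiv (Fin d) ℂ).symm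
    with hL
  have hnorm : ∀ x : Fin d → ℂ, ‖L x‖ = Real.sqrt (cnorm2 x) := by
    intro x
    rw [EuclideanSpace.norm_eq]
    unfold cnorm2
    congr 1
  have hLsum : Summable fun i => L (f i) := by
    apply Summable.of_norm
    simpa only [hnorm] using hf
  have hfsum : Summable f := by
    have := hLsum.map (L.symm : EuclideanSpace ℂ (Fin d) →L[ℂ] (Fin d → ℂ))
      L.symm.continuous
    simpa only [Function.comp_def, ContinuousLinearEquiv.coe_coe,
      ContinuousLinearEquiv.symm_apply_apply] using this
  have hmap : L (∑' i, f i) = ∑' i, L (f i) :=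
    (L : (Fin d → ℂ) →L[ℂ] EuclideanSpace ℂ (Fin d)).map_tsum hfsum
  calc Real.sqrt (cnorm2 (∑' i, f i)) = ‖L (∑' i, f i)‖ := (hnorm _).symm
    _ = ‖∑' i, L (f i)‖ := by rw [hmap]
    _ ≤ ∑' i, ‖L (f i)‖ := norm_tsum_le_tsum_norm (by simpa only [hnorm] using hf)
    _ = ∑' i, Real.sqrt (cnorm2 (f i)) := tsum_congr fun i => hnorm _

/-- Cauchy–Schwarz bound on the pairing `a · m`. -/
lemma inner_bound {d : ℕ} (a : Fin d → ℂ) (m : Fin d → ℤ) :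
    ‖∑ r, a r * ((m r : ℤ) : ℂ)‖ ≤ Real.sqrt (cnorm2 a) * znorm m := by
  have h1 : ‖∑ r, a r * ((m r : ℤ) : ℂ)‖ ≤
      ∑ r, ‖a r‖ * |(m r : ℝ)| := by
    refine le_trans (norm_sum_le _ _) (le_of_eq ?_)
    refine Finset.sum_congr rfl fun r _ => ?_
    rw [norm_mul]
    congr 1
    rw [Complex.norm_intCast]
  refine h1.trans ?_
  have hCS : (∑ r, ‖a r‖ * |(m r : ℝ)|) ^ 2 ≤
      (∑ r, ‖a r‖ ^ 2) * ∑ r, |(m r : ℝ)| ^ 2 :=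
    Finset.sum_mul_sq_le_sq_mul_sq _ _ _
  have hnn : (0:ℝ) ≤ ∑ r, ‖a r‖ * |(m r : ℝ)| :=
    Finset.sum_nonneg fun r _ => by positivity
  calc (∑ r, ‖a r‖ * |(m r : ℝ)|)
      = Real.sqrt ((∑ r, ‖a r‖ * |(m r : ℝ)|) ^ 2) := (Real.sqrt_sq hnn).symm
    _ ≤ Real.sqrt ((∑ r, ‖a r‖ ^ 2) * ∑ r, |(m r : ℝ)| ^ 2) :=
        Real.sqrt_le_sqrt hCS
    _ = Real.sqrt (cnorm2 a) * znorm m := by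
        unfold cnorm2 znorm
        rw [Real.sqrt_mul (by positivity)]
        congr 2
        exact Finset.sum_congr rfl fun r _ => by rw [sq_abs]

end Stmt11Aux

namespace Stmt11Aux

def convEquiv (d : ℕ) : ((Fin d → ℤ) × (Fin d → ℤ)) ≃ ((Fin d → ℤ) × (Fin d → ℤ)) where
  toFun p := (p.1 + p.2, p.1)
  invFun p := (p.2, p.1 - p.2)
  left_inv p := by simp
  right_inv p := by simp

lemma convEquiv_apply {d : ℕ} (q : (Fin d → ℤ) × (Fin d → ℤ)) :
    convEquiv d q = (q.1 + q.2, q.1) := rfl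

end Stmt11Aux

set_option maxHeartbeats 2000000 in
/-- The fundamental bilinear estimate in Fourier space: for families `v, w` of vectors of
`ℂ^d` with `‖v‖_n, ‖w‖_n < ∞` (`n > d/2`), the series defining
`(v·∂w)_k = i(2π)^{−d/2} ∑_h (v_h·(k−h)) w_{k−h}` converges absolutely for each `k`,
`∑_k (1+|k|²)^{n−1}|(v·∂w)_k|² ≤ (sup_k 𝒦_n(k)) ‖v‖_n² ‖w‖_n²`, and
`‖v·∂w‖_{n−1} ≤ K_n ‖v‖_n ‖w‖_n` for any `K_n` with `√(sup_k 𝒦_n(k)) ≤ K_n`. -/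
theorem stmt_11 (d : ℕ) (hd : 2 ≤ d) (n : ℝ) (hn : (d : ℝ) / 2 < n)
    (v w : (Fin d → ℤ) → (Fin d → ℂ))
    (hv : Summable (fun k : Fin d → ℤ => (1 + znorm k ^ 2) ^ n * cnorm2 (v k)))
    (hw : Summable (fun k : Fin d → ℤ => (1 + znorm k ^ 2) ^ n * cnorm2 (w k)))
    (pd : (Fin d → ℤ) → (Fin d → ℂ))
    (hpd : ∀ k : Fin d → ℤ, pd k =
      (Complex.I / Complex.ofReal ((2 * Real.pi) ^ ((d : ℝ) / 2))) •
        ∑' h : Fin d → ℤ, (∑ r, v h r * (((k - h) r : ℤ) : ℂ)) • w (k - h))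
    (KK : (Fin d → ℤ) → ℝ)
    (hKK : ∀ k, KK k = (1 + znorm k ^ 2) ^ (n - 1) / (2 * Real.pi) ^ d *
      ∑' h : Fin d → ℤ,
        znorm (k - h) ^ 2 /
          ((1 + znorm h ^ 2) ^ n * (1 + znorm (k - h) ^ 2) ^ n)) :
    (∀ k : Fin d → ℤ, Summable (fun h : Fin d → ℤ =>
      Real.sqrt (cnorm2 ((∑ r, v h r * (((k - h) r : ℤ) : ℂ)) • w (k - h))))) ∧
    Summable (fun k : Fin d → ℤ => (1 + znorm k ^ 2) ^ (n - 1) * cnorm2 (pd k)) ∧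
    (∀ S : ℝ, (∀ k : Fin d → ℤ, KK k ≤ S) →
      (∑' k : Fin d → ℤ, (1 + znorm k ^ 2) ^ (n - 1) * cnorm2 (pd k)) ≤
        S * ((∑' k : Fin d → ℤ, (1 + znorm k ^ 2) ^ n * cnorm2 (v k)) *
          (∑' k : Fin d → ℤ, (1 + znorm k ^ 2) ^ n * cnorm2 (w k)))) ∧
    (∀ Kn : ℝ, (∀ k : Fin d → ℤ, Real.sqrt (KK k) ≤ Kn) →
      Real.sqrt (∑' k : Fin d → ℤ, (1 + znorm k ^ 2) ^ (n - 1) * cnorm2 (pd k)) ≤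
        Kn * (Real.sqrt (∑' k : Fin d → ℤ, (1 + znorm k ^ 2) ^ n * cnorm2 (v k)) *
          Real.sqrt (∑' k : Fin d → ℤ, (1 + znorm k ^ 2) ^ n * cnorm2 (w k)))) := by
  open Stmt11Aux in
  have hπd : (0:ℝ) < (2 * Real.pi) ^ d := by positivity
  have hd0 : 0 < d := by omega
  have hn1 : (1:ℝ) ≤ n := by
    have h2 : (2:ℝ) ≤ (d:ℝ) := by exact_mod_cast hd
    linarith
  have hA0 : ∀ h : Fin d → ℤ, 0 ≤ (1 + znorm h ^ 2) ^ n * cnorm2 (v h) := fun h =>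
    mul_nonneg (Real.rpow_nonneg (Stmt11Aux.Q_pos h).le _) (Stmt11Aux.cnorm2_nonneg _)
  have hB0 : ∀ h : Fin d → ℤ, 0 ≤ (1 + znorm h ^ 2) ^ n * cnorm2 (w h) := fun h =>
    mul_nonneg (Real.rpow_nonneg (Stmt11Aux.Q_pos h).le _) (Stmt11Aux.cnorm2_nonneg _)
  -- shifted summability
  have hshift : ∀ (f : (Fin d → ℤ) → ℝ), Summable f →
      ∀ k : Fin d → ℤ, Summable (fun h => f (k - h)) := by
    intro f hf k
    exact ((Equiv.subLeft k).summable_iff (f := f)).mpr hf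
  have hshift_tsum : ∀ (f : (Fin d → ℤ) → ℝ) (k : Fin d → ℤ),
      (∑' h, f (k - h)) = ∑' m, f m := by
    intro f k
    exact (Equiv.subLeft k).tsum_eq f
  have hT : Summable (fun h : Fin d → ℤ => (1 + znorm h ^ 2) ^ (-n)) :=
    Stmt11Aux.zd_summable hd0 hn
  -- nonnegativity of the 𝒦-summand
  have hs0 : ∀ k h : Fin d → ℤ, 0 ≤ znorm (k - h) ^ 2 /
      ((1 + znorm h ^ 2) ^ n * (1 + znorm (k - h) ^ 2) ^ n) := fun k h => by positivity
  -- key pointwise inequality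
  have hkey : ∀ k h : Fin d → ℤ,
      (1 + znorm k ^ 2) ^ (n - 1) * (znorm (k - h) ^ 2 /
        ((1 + znorm h ^ 2) ^ n * (1 + znorm (k - h) ^ 2) ^ n)) ≤
      4 ^ (n - 1) * ((1 + znorm h ^ 2) ^ (-n) + (1 + znorm (k - h) ^ 2) ^ (-n)) := by
    intro k h
    exact Stmt11Aux.key_aux hn1 (Stmt11Aux.one_le_Q h) (Stmt11Aux.one_le_Q (k - h))
      (Stmt11Aux.Q_pos k).le (sq_nonneg _)
      (by nlinarith [Stmt11Aux.znorm_nonneg (k - h)])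
      (Stmt11Aux.Q_le_four_max k h)
  have hbndsum : ∀ k : Fin d → ℤ, Summable (fun h : Fin d → ℤ =>
      4 ^ (n - 1) * ((1 + znorm h ^ 2) ^ (-n) + (1 + znorm (k - h) ^ 2) ^ (-n))) := by
    intro k
    exact (hT.add (hshift (fun m => (1 + znorm m ^ 2) ^ (-n)) hT k)).mul_left _
  have hone_le : ∀ k : Fin d → ℤ, (1:ℝ) ≤ (1 + znorm k ^ 2) ^ (n - 1) := by
    intro k
    have := Real.rpow_le_rpow_of_exponent_le (Stmt11Aux.one_le_Q k)
      (by linarith : (0:ℝ) ≤ n - 1)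
    rwa [Real.rpow_zero] at this
  have hssum : ∀ k : Fin d → ℤ, Summable (fun h : Fin d → ℤ =>
      znorm (k - h) ^ 2 / ((1 + znorm h ^ 2) ^ n * (1 + znorm (k - h) ^ 2) ^ n)) := by
    intro k
    refine (hbndsum k).of_nonneg_of_le (hs0 k) fun h => ?_
    refine le_trans ?_ (hkey k h)
    exact le_mul_of_one_le_left (hs0 k h) (hone_le k)
  have hsmulsum : ∀ k : Fin d → ℤ, Summable (fun h : Fin d → ℤ =>
      (1 + znorm k ^ 2) ^ (n - 1) * (znorm (k - h) ^ 2 /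
        ((1 + znorm h ^ 2) ^ n * (1 + znorm (k - h) ^ 2) ^ n))) :=
    fun k => (hssum k).mul_left _
  have hKK0 : ∀ k, 0 ≤ KK k := by
    intro k
    rw [hKK k]
    exact mul_nonneg (div_nonneg (Real.rpow_nonneg (Stmt11Aux.Q_pos k).le _) hπd.le)
      (tsum_nonneg (hs0 k))
  -- uniform bound on KK
  have hKKle : ∀ k, KK k ≤ 4 ^ (n - 1) *
      (2 * ∑' h : Fin d → ℤ, (1 + znorm h ^ 2) ^ (-n)) / (2 * Real.pi) ^ d := by
    intro k
    rw [hKK k]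
    have h2 : (1 + znorm k ^ 2) ^ (n - 1) * ∑' h : Fin d → ℤ, znorm (k - h) ^ 2 /
        ((1 + znorm h ^ 2) ^ n * (1 + znorm (k - h) ^ 2) ^ n) ≤
        4 ^ (n - 1) * (2 * ∑' h : Fin d → ℤ, (1 + znorm h ^ 2) ^ (-n)) := by
      rw [← tsum_mul_left]
      refine le_trans (Summable.tsum_le_tsum (hkey k) (hsmulsum k) (hbndsum k)) ?_
      rw [tsum_mul_left, Summable.tsum_add hT (hshift (fun m => (1 + znorm m ^ 2) ^ (-n)) hT k),
        hshift_tsum (fun m => (1 + znorm m ^ 2) ^ (-n)) k]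
      apply le_of_eq
      ring
    calc (1 + znorm k ^ 2) ^ (n - 1) / (2 * Real.pi) ^ d *
          ∑' h : Fin d → ℤ, znorm (k - h) ^ 2 /
            ((1 + znorm h ^ 2) ^ n * (1 + znorm (k - h) ^ 2) ^ n)
        = ((1 + znorm k ^ 2) ^ (n - 1) * ∑' h : Fin d → ℤ, znorm (k - h) ^ 2 /
            ((1 + znorm h ^ 2) ^ n * (1 + znorm (k - h) ^ 2) ^ n)) / (2 * Real.pi) ^ d := by
          ring
      _ ≤ 4 ^ (n - 1) * (2 * ∑' h : Fin d → ℤ, (1 + znorm h ^ 2) ^ (-n)) /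
            (2 * Real.pi) ^ d := by
          gcongr
  -- per-k product weights
  have hu0 : ∀ k h : Fin d → ℤ, 0 ≤ ((1 + znorm h ^ 2) ^ n * cnorm2 (v h)) *
      ((1 + znorm (k - h) ^ 2) ^ n * cnorm2 (w (k - h))) :=
    fun k h => mul_nonneg (hA0 h) (hB0 (k - h))
  have husum : ∀ k : Fin d → ℤ, Summable (fun h : Fin d → ℤ =>
      ((1 + znorm h ^ 2) ^ n * cnorm2 (v h)) *
      ((1 + znorm (k - h) ^ 2) ^ n * cnorm2 (w (k - h)))) := by
    intro k
    have hBs : Summable (fun h : Fin d → ℤ =>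
        (1 + znorm (k - h) ^ 2) ^ n * cnorm2 (w (k - h))) :=
      hshift (fun m => (1 + znorm m ^ 2) ^ n * cnorm2 (w m)) hw k
    refine (hBs.mul_left
        (∑' m : Fin d → ℤ, (1 + znorm m ^ 2) ^ n * cnorm2 (v m))).of_nonneg_of_le
      (hu0 k) fun h => ?_
    exact mul_le_mul_of_nonneg_right (Summable.le_tsum hv h fun _ _ => hA0 _) (hB0 (k - h))
  -- algebraic identity
  have hid : ∀ k h : Fin d → ℤ,
      (((1 + znorm h ^ 2) ^ n * cnorm2 (v h)) *
        ((1 + znorm (k - h) ^ 2) ^ n * cnorm2 (w (k - h)))) *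
      (znorm (k - h) ^ 2 / ((1 + znorm h ^ 2) ^ n * (1 + znorm (k - h) ^ 2) ^ n)) =
      cnorm2 (v h) * (znorm (k - h) ^ 2 * cnorm2 (w (k - h))) := by
    intro k h
    have h1 : (0:ℝ) < (1 + znorm h ^ 2) ^ n := Real.rpow_pos_of_pos (Stmt11Aux.Q_pos h) n
    have h2 : (0:ℝ) < (1 + znorm (k - h) ^ 2) ^ n :=
      Real.rpow_pos_of_pos (Stmt11Aux.Q_pos (k - h)) n
    field_simp
  -- pointwise bound on the summand vectors
  have hvec_le : ∀ k h : Fin d → ℤ,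
      Real.sqrt (cnorm2 ((∑ r, v h r * (((k - h) r : ℤ) : ℂ)) • w (k - h))) ≤
      Real.sqrt ((((1 + znorm h ^ 2) ^ n * cnorm2 (v h)) *
        ((1 + znorm (k - h) ^ 2) ^ n * cnorm2 (w (k - h)))) *
        (znorm (k - h) ^ 2 / ((1 + znorm h ^ 2) ^ n * (1 + znorm (k - h) ^ 2) ^ n))) := by
    intro k h
    apply Real.sqrt_le_sqrt
    rw [Stmt11Aux.cnorm2_smul, hid k h]
    have hb := Stmt11Aux.inner_bound (v h) (k - h)
    have hsq : ‖∑ r, v h r * (((k - h) r : ℤ) : ℂ)‖ ^ 2 ≤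
        (Real.sqrt (cnorm2 (v h)) * znorm (k - h)) ^ 2 :=
      pow_le_pow_left₀ (norm_nonneg _) hb 2
    calc ‖∑ r, v h r * (((k - h) r : ℤ) : ℂ)‖ ^ 2 * cnorm2 (w (k - h))
        ≤ (Real.sqrt (cnorm2 (v h)) * znorm (k - h)) ^ 2 * cnorm2 (w (k - h)) :=
          mul_le_mul_of_nonneg_right hsq (Stmt11Aux.cnorm2_nonneg _)
      _ = cnorm2 (v h) * (znorm (k - h) ^ 2 * cnorm2 (w (k - h))) := by
          rw [mul_pow, Real.sq_sqrt (Stmt11Aux.cnorm2_nonneg _)]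
          ring
  -- conclusion 1
  have hc1 : ∀ k : Fin d → ℤ, Summable (fun h : Fin d → ℤ =>
      Real.sqrt (cnorm2 ((∑ r, v h r * (((k - h) r : ℤ) : ℂ)) • w (k - h)))) := by
    intro k
    exact (Stmt11Aux.sqrt_mul_summable (husum k) (hssum k) (hu0 k) (hs0 k)).of_nonneg_of_le
      (fun h => Real.sqrt_nonneg _) (hvec_le k)
  -- modulus of the prefactor
  have habs : ‖Complex.I / Complex.ofReal ((2 * Real.pi) ^ ((d : ℝ) / 2))‖ ^ 2 =
      1 / (2 * Real.pi) ^ d := by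
    have hrp : (0:ℝ) < (2 * Real.pi) ^ ((d : ℝ) / 2) :=
      Real.rpow_pos_of_pos (by positivity) _
    rw [norm_div, Complex.norm_I, Complex.norm_real, Real.norm_eq_abs, abs_of_pos hrp, div_pow, one_pow]
    congr 1
    rw [← Real.rpow_natCast ((2 * Real.pi) ^ ((d : ℝ) / 2)) 2,
      ← Real.rpow_mul (by positivity : (0:ℝ) ≤ 2 * Real.pi)]
    have hde : (d : ℝ) / 2 * (2 : ℕ) = ((d : ℕ) : ℝ) := by push_cast; ring
    rw [hde, Real.rpow_natCast]
  -- main per-k estimate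
  have hmain : ∀ k : Fin d → ℤ,
      (1 + znorm k ^ 2) ^ (n - 1) * cnorm2 (pd k) ≤
      KK k * ∑' h : Fin d → ℤ, ((1 + znorm h ^ 2) ^ n * cnorm2 (v h)) *
        ((1 + znorm (k - h) ^ 2) ^ n * cnorm2 (w (k - h))) := by
    intro k
    rw [hpd k, Stmt11Aux.cnorm2_smul, habs, hKK k]
    have hst : Real.sqrt (cnorm2 (∑' h : Fin d → ℤ,
        (∑ r, v h r * (((k - h) r : ℤ) : ℂ)) • w (k - h))) ≤
        Real.sqrt ((∑' h : Fin d → ℤ, ((1 + znorm h ^ 2) ^ n * cnorm2 (v h)) *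
            ((1 + znorm (k - h) ^ 2) ^ n * cnorm2 (w (k - h)))) *
          ∑' h : Fin d → ℤ, znorm (k - h) ^ 2 /
            ((1 + znorm h ^ 2) ^ n * (1 + znorm (k - h) ^ 2) ^ n)) :=
      le_trans (Stmt11Aux.sqrt_cnorm2_tsum_le _ (hc1 k)) (le_trans
        (Summable.tsum_le_tsum (hvec_le k) (hc1 k)
          (Stmt11Aux.sqrt_mul_summable (husum k) (hssum k) (hu0 k) (hs0 k)))
        (Stmt11Aux.tsum_sqrt_mul_le (husum k) (hssum k) (hu0 k) (hs0 k)))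
    have hrhs0 : 0 ≤ (∑' h : Fin d → ℤ, ((1 + znorm h ^ 2) ^ n * cnorm2 (v h)) *
          ((1 + znorm (k - h) ^ 2) ^ n * cnorm2 (w (k - h)))) *
        ∑' h : Fin d → ℤ, znorm (k - h) ^ 2 /
          ((1 + znorm h ^ 2) ^ n * (1 + znorm (k - h) ^ 2) ^ n) :=
      mul_nonneg (tsum_nonneg (hu0 k)) (tsum_nonneg (hs0 k))
    have hcn : cnorm2 (∑' h : Fin d → ℤ,
        (∑ r, v h r * (((k - h) r : ℤ) : ℂ)) • w (k - h)) ≤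
        (∑' h : Fin d → ℤ, ((1 + znorm h ^ 2) ^ n * cnorm2 (v h)) *
            ((1 + znorm (k - h) ^ 2) ^ n * cnorm2 (w (k - h)))) *
          ∑' h : Fin d → ℤ, znorm (k - h) ^ 2 /
            ((1 + znorm h ^ 2) ^ n * (1 + znorm (k - h) ^ 2) ^ n) := by
      have e1 := Real.sq_sqrt (Stmt11Aux.cnorm2_nonneg (∑' h : Fin d → ℤ,
        (∑ r, v h r * (((k - h) r : ℤ) : ℂ)) • w (k - h)))
      have e2 := Real.sq_sqrt hrhs0
      nlinarith [Real.sqrt_nonneg (cnorm2 (∑' h : Fin d → ℤ,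
        (∑ r, v h r * (((k - h) r : ℤ) : ℂ)) • w (k - h)))]
    calc (1 + znorm k ^ 2) ^ (n - 1) * (1 / (2 * Real.pi) ^ d * cnorm2 (∑' h : Fin d → ℤ,
          (∑ r, v h r * (((k - h) r : ℤ) : ℂ)) • w (k - h)))
        ≤ (1 + znorm k ^ 2) ^ (n - 1) * (1 / (2 * Real.pi) ^ d *
            ((∑' h : Fin d → ℤ, ((1 + znorm h ^ 2) ^ n * cnorm2 (v h)) *
              ((1 + znorm (k - h) ^ 2) ^ n * cnorm2 (w (k - h)))) *
            ∑' h : Fin d → ℤ, znorm (k - h) ^ 2 /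
              ((1 + znorm h ^ 2) ^ n * (1 + znorm (k - h) ^ 2) ^ n))) := by
          refine mul_le_mul_of_nonneg_left ?_ (Real.rpow_nonneg (Stmt11Aux.Q_pos k).le _)
          exact mul_le_mul_of_nonneg_left hcn (by positivity)
      _ = ((1 + znorm k ^ 2) ^ (n - 1) / (2 * Real.pi) ^ d *
            ∑' h : Fin d → ℤ, znorm (k - h) ^ 2 /
              ((1 + znorm h ^ 2) ^ n * (1 + znorm (k - h) ^ 2) ^ n)) *
          ∑' h : Fin d → ℤ, ((1 + znorm h ^ 2) ^ n * cnorm2 (v h)) *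
            ((1 + znorm (k - h) ^ 2) ^ n * cnorm2 (w (k - h))) := by ring
  -- global convolution identity
  have hAB : Summable (fun q : (Fin d → ℤ) × (Fin d → ℤ) =>
      ((1 + znorm q.1 ^ 2) ^ n * cnorm2 (v q.1)) *
      ((1 + znorm q.2 ^ 2) ^ n * cnorm2 (w q.2))) :=
    Summable.mul_of_nonneg
      (g := fun m : Fin d → ℤ => (1 + znorm m ^ 2) ^ n * cnorm2 (w m)) hv hw
      (fun h => hA0 h) (fun h => hB0 h)
  let e : ((Fin d → ℤ) × (Fin d → ℤ)) ≃ ((Fin d → ℤ) × (Fin d → ℤ)) := Stmt11Aux.convEquiv d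
  have heapp : ∀ q : (Fin d → ℤ) × (Fin d → ℤ),
      ((1 + znorm (e q).2 ^ 2) ^ n * cnorm2 (v (e q).2)) *
        ((1 + znorm ((e q).1 - (e q).2) ^ 2) ^ n * cnorm2 (w ((e q).1 - (e q).2))) =
      ((1 + znorm q.1 ^ 2) ^ n * cnorm2 (v q.1)) *
        ((1 + znorm q.2 ^ 2) ^ n * cnorm2 (w q.2)) := by
    intro q
    rw [Stmt11Aux.convEquiv_apply]
    show ((1 + znorm q.1 ^ 2) ^ n * cnorm2 (v q.1)) *
        ((1 + znorm (q.1 + q.2 - q.1) ^ 2) ^ n * cnorm2 (w (q.1 + q.2 - q.1))) = _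
    rw [add_sub_cancel_left]
  have hF : Summable (fun p : (Fin d → ℤ) × (Fin d → ℤ) =>
      ((1 + znorm p.2 ^ 2) ^ n * cnorm2 (v p.2)) *
      ((1 + znorm (p.1 - p.2) ^ 2) ^ n * cnorm2 (w (p.1 - p.2)))) := by
    rw [← e.summable_iff]
    exact hAB.congr fun q => (heapp q).symm
  have htsumF : (∑' p : (Fin d → ℤ) × (Fin d → ℤ),
      ((1 + znorm p.2 ^ 2) ^ n * cnorm2 (v p.2)) *
      ((1 + znorm (p.1 - p.2) ^ 2) ^ n * cnorm2 (w (p.1 - p.2)))) =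
      (∑' k : Fin d → ℤ, (1 + znorm k ^ 2) ^ n * cnorm2 (v k)) *
      (∑' k : Fin d → ℤ, (1 + znorm k ^ 2) ^ n * cnorm2 (w k)) := by
    rw [← e.tsum_eq, tsum_congr heapp]
    exact (Summable.tsum_mul_tsum hv hw hAB).symm
  have hUhas : HasSum (fun k : Fin d → ℤ => ∑' h : Fin d → ℤ,
      ((1 + znorm h ^ 2) ^ n * cnorm2 (v h)) *
      ((1 + znorm (k - h) ^ 2) ^ n * cnorm2 (w (k - h))))
      ((∑' k : Fin d → ℤ, (1 + znorm k ^ 2) ^ n * cnorm2 (v k)) *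
       (∑' k : Fin d → ℤ, (1 + znorm k ^ 2) ^ n * cnorm2 (w k))) := by
    rw [← htsumF]
    exact HasSum.prod_fiberwise hF.hasSum fun k => (husum k).hasSum
  -- conclusion 2
  have hLsum : Summable (fun k : Fin d → ℤ => (1 + znorm k ^ 2) ^ (n - 1) * cnorm2 (pd k)) := by
    refine (hUhas.summable.mul_left (4 ^ (n - 1) *
        (2 * ∑' h : Fin d → ℤ, (1 + znorm h ^ 2) ^ (-n)) /
        (2 * Real.pi) ^ d)).of_nonneg_of_le
      (fun k => mul_nonneg (Real.rpow_nonneg (Stmt11Aux.Q_pos k).le _)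
        (Stmt11Aux.cnorm2_nonneg _)) fun k => ?_
    refine (hmain k).trans ?_
    exact mul_le_mul_of_nonneg_right (hKKle k) (tsum_nonneg (hu0 k))
  -- conclusion 3
  have hc3 : ∀ S : ℝ, (∀ k : Fin d → ℤ, KK k ≤ S) →
      (∑' k : Fin d → ℤ, (1 + znorm k ^ 2) ^ (n - 1) * cnorm2 (pd k)) ≤
        S * ((∑' k : Fin d → ℤ, (1 + znorm k ^ 2) ^ n * cnorm2 (v k)) *
          (∑' k : Fin d → ℤ, (1 + znorm k ^ 2) ^ n * cnorm2 (w k))) := by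
    intro S hS
    calc (∑' k : Fin d → ℤ, (1 + znorm k ^ 2) ^ (n - 1) * cnorm2 (pd k))
        ≤ ∑' k : Fin d → ℤ, S * ∑' h : Fin d → ℤ,
            ((1 + znorm h ^ 2) ^ n * cnorm2 (v h)) *
            ((1 + znorm (k - h) ^ 2) ^ n * cnorm2 (w (k - h))) := by
          refine Summable.tsum_le_tsum (fun k => ?_) hLsum (hUhas.summable.mul_left S)
          exact (hmain k).trans
            (mul_le_mul_of_nonneg_right (hS k) (tsum_nonneg (hu0 k)))
      _ = S * ((∑' k : Fin d → ℤ, (1 + znorm k ^ 2) ^ n * cnorm2 (v k)) *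
          (∑' k : Fin d → ℤ, (1 + znorm k ^ 2) ^ n * cnorm2 (w k))) := by
          rw [tsum_mul_left, hUhas.tsum_eq]
  refine ⟨hc1, hLsum, hc3, ?_⟩
  -- conclusion 4
  intro Kn hKn
  have hKn0 : 0 ≤ Kn := (Real.sqrt_nonneg (KK 0)).trans (hKn 0)
  have hS : ∀ k, KK k ≤ Kn ^ 2 := by
    intro k
    have h1 := hKn k
    nlinarith [Real.sq_sqrt (hKK0 k), Real.sqrt_nonneg (KK k)]
  have h3 := hc3 (Kn ^ 2) hS
  have hAnn : 0 ≤ ∑' k : Fin d → ℤ, (1 + znorm k ^ 2) ^ n * cnorm2 (v k) := tsum_nonneg hA0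
  have hBnn : 0 ≤ ∑' k : Fin d → ℤ, (1 + znorm k ^ 2) ^ n * cnorm2 (w k) := tsum_nonneg hB0
  calc Real.sqrt (∑' k : Fin d → ℤ, (1 + znorm k ^ 2) ^ (n - 1) * cnorm2 (pd k))
      ≤ Real.sqrt (Kn ^ 2 * ((∑' k : Fin d → ℤ, (1 + znorm k ^ 2) ^ n * cnorm2 (v k)) *
          (∑' k : Fin d → ℤ, (1 + znorm k ^ 2) ^ n * cnorm2 (w k)))) := Real.sqrt_le_sqrt h3
    _ = Kn * (Real.sqrt (∑' k : Fin d → ℤ, (1 + znorm k ^ 2) ^ n * cnorm2 (v k)) *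
          Real.sqrt (∑' k : Fin d → ℤ, (1 + znorm k ^ 2) ^ n * cnorm2 (w k))) := by
        rw [Real.sqrt_mul (by positivity), Real.sqrt_sq hKn0, Real.sqrt_mul hAnn]
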